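/- arXiv:1903.05811 — 2 statements merged into one kernel-verified Lean document; each statement's English description precedes it below -/
import Mathlib

section
/- Let ℓ be a positive even integer and E_ℓ(t) = Σ_{s=0}^{ℓ} t^s/s!. Then for every real t with t ≤ ℓ/e², one has e^t ≤ (1 + e^{-ℓ/2})·E_ℓ(t). -/
open Finset

private lemma exp_tsum' (t : ℝ) : Real.exp t = ∑' n : ℕ, t ^ n / (Nat.factorial n : ℝ) := by
  rw [Real.exp_eq_exp_ℝ, NormedSpace.exp_eq_tsum_div]

private lemma summable_exp' (t : ℝ) : Summable (fun n : ℕ => t ^ n / (Nat.factorial n : ℝ)) :=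
  NormedSpace.expSeries_div_summable t

/-- pair identity -/
private lemma pair_eq (t : ℝ) (m : ℕ) :
    t ^ m / (Nat.factorial m : ℝ) + t ^ (m + 1) / (Nat.factorial (m + 1) : ℝ)
      = t ^ m * (((m : ℝ) + 1) + t) / (Nat.factorial (m + 1) : ℝ) := by
  have h1 : (0:ℝ) < (Nat.factorial m : ℝ) := by exact_mod_cast m.factorial_pos
  have h2 : (0:ℝ) < (Nat.factorial (m+1) : ℝ) := by exact_mod_cast (m+1).factorial_pos
  rw [pow_succ, Nat.factorial_succ]
  push_cast
  field_simp

private lemma sum_split (f : ℕ → ℝ) (m : ℕ) :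
    ∑ s ∈ range (2 * m + 1), f s = f 0 + ∑ j ∈ range m, (f (2 * j + 1) + f (2 * j + 2)) := by
  induction m with
  | zero => simp
  | succ n ih =>
      have : 2 * (n + 1) + 1 = (2 * n + 1) + 1 + 1 := by ring
      rw [this, Finset.sum_range_succ, Finset.sum_range_succ, ih, Finset.sum_range_succ]
      ring

private lemma pow_self_le (n : ℕ) : (n : ℝ) ^ n ≤ (Nat.factorial n : ℝ) * Real.exp n := by
  have hfac : (0:ℝ) < (Nat.factorial n : ℝ) := by exact_mod_cast n.factorial_pos
  have h1 : (n : ℝ) ^ n / (Nat.factorial n : ℝ) ≤ Real.exp n := by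
    refine le_trans ?_ (Real.sum_le_exp_of_nonneg (by positivity) (n + 1))
    exact Finset.single_le_sum (f := fun i => (n:ℝ)^i / (Nat.factorial i : ℝ))
      (fun i _ => by positivity) (Finset.self_mem_range_succ n)
  calc (n : ℝ) ^ n = (n : ℝ) ^ n / (Nat.factorial n : ℝ) * (Nat.factorial n : ℝ) := by
        field_simp
    _ ≤ Real.exp n * (Nat.factorial n : ℝ) := by
        exact mul_le_mul_of_nonneg_right h1 hfac.le
    _ = (Nat.factorial n : ℝ) * Real.exp n := by ring

/-- For a positive even integer `ℓ` and `E_ℓ(t) = ∑_{s=0}^{ℓ} t^s/s!`, if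
`t ≤ ℓ/e²` then `e^t ≤ (1 + e^{-ℓ/2})·E_ℓ(t)`. -/
theorem exp_le_truncated_exp (ℓ : ℕ) (hpos : 0 < ℓ) (heven : Even ℓ) (t : ℝ)
    (ht : t ≤ (ℓ : ℝ) / (Real.exp 1) ^ 2) :
    Real.exp t ≤ (1 + Real.exp (-(ℓ : ℝ) / 2)) *
      ∑ s ∈ Finset.range (ℓ + 1), t ^ s / (Nat.factorial s : ℝ) := by
  set E := ∑ s ∈ Finset.range (ℓ + 1), t ^ s / (Nat.factorial s : ℝ) with hE
  set δ := Real.exp (-(ℓ : ℝ) / 2) with hδ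
  have hδpos : 0 < δ := Real.exp_pos _
  have hℓ2 : 2 ≤ ℓ := by
    obtain ⟨m, hm⟩ := heven; omega
  rcases le_total t 0 with ht0 | ht0
  · -- negative case: show exp t ≤ E
    have hexpE : Real.exp t ≤ E := by
      rcases le_total t (-(ℓ:ℝ)) with htℓ | htℓ
      · -- t ≤ -ℓ : E ≥ 1
        obtain ⟨m, hm⟩ := heven
        have hℓ : ℓ = 2 * m := by omega
        have h1E : 1 ≤ E := by
          rw [hE, hℓ, sum_split]
          have h0 : t ^ 0 / (Nat.factorial 0 : ℝ) = 1 := by norm_num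
          rw [h0]
          have hpairs : 0 ≤ ∑ j ∈ range m, (t ^ (2*j+1) / (Nat.factorial (2*j+1) : ℝ)
              + t ^ (2*j+2) / (Nat.factorial (2*j+2) : ℝ)) := by
            refine Finset.sum_nonneg fun j hj => ?_
            have hj' : j < m := Finset.mem_range.1 hj
            have := pair_eq t (2*j+1)
            rw [show (2*j+1)+1 = 2*j+2 from rfl] at this
            rw [this]
            have hodd : Odd (2*j+1) := ⟨j, by ring⟩
            have hp : t ^ (2*j+1) ≤ 0 := hodd.pow_nonpos ht0
            have hq : ((2*j+1 : ℕ) : ℝ) + 1 + t ≤ 0 := by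
              have : t ≤ -(2*(m:ℝ)) := by
                have : ((ℓ:ℝ)) = 2*m := by exact_mod_cast congrArg Nat.cast hℓ
                linarith [htℓ, this.symm ▸ htℓ]
              push_cast
              have : (2*(j:ℝ)+1) + 1 ≤ 2*m := by
                have : (j:ℝ) + 1 ≤ m := by exact_mod_cast hj'
                linarith
              linarith
            have hfac : (0:ℝ) < (Nat.factorial (2*j+2) : ℝ) := by
              exact_mod_cast (2*j+2).factorial_pos
            have hnum : 0 ≤ t ^ (2*j+1) * (((2*j+1 : ℕ) : ℝ) + 1 + t) := by
              nlinarith [mul_nonneg (neg_nonneg.2 hp) (neg_nonneg.2 hq)]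
            positivity
          linarith
        calc Real.exp t ≤ Real.exp 0 := Real.exp_le_exp.2 ht0
          _ = 1 := Real.exp_zero
          _ ≤ E := h1E
      · -- -ℓ ≤ t ≤ 0 : tail is nonpositive
        set f : ℕ → ℝ := fun n => t ^ n / (Nat.factorial n : ℝ) with hf
        have hsum : Summable f := summable_exp' t
        have hkey : Real.exp t = E + ∑' k, f (k + (ℓ + 1)) := by
          rw [exp_tsum' t, ← Summable.sum_add_tsum_nat_add (ℓ+1) hsum]
        set g : ℕ → ℝ := fun k => f (k + (ℓ + 1)) with hg
        have hgsum : Summable g := (summable_nat_add_iff (ℓ+1)).2 hsum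
        have he : Summable (fun k => g (2 * k)) :=
          hgsum.comp_injective (fun a b h => by omega)
        have ho : Summable (fun k => g (2 * k + 1)) :=
          hgsum.comp_injective (fun a b h => by omega)
        have hsplit : ∑' k, g (2*k) + ∑' k, g (2*k+1) = ∑' k, g k :=
          tsum_even_add_odd he ho
        have hpairs : ∀ j : ℕ, g (2*j) + g (2*j+1) ≤ 0 := by
          intro j
          have : g (2*j) + g (2*j+1)
              = t ^ (2*j+ℓ+1) * (((2*j+ℓ+1 : ℕ) : ℝ) + 1 + t) / (Nat.factorial (2*j+ℓ+2) : ℝ) := by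
            simp only [hg, hf]
            have e1 : 2*j + (ℓ+1) = 2*j+ℓ+1 := by omega
            have e2 : 2*j + 1 + (ℓ+1) = (2*j+ℓ+1) + 1 := by omega
            rw [e1, e2, pair_eq t (2*j+ℓ+1)]
          rw [this]
          obtain ⟨m, hm⟩ := heven
          have hodd : Odd (2*j+ℓ+1) := ⟨j + m, by omega⟩
          have hp : t ^ (2*j+ℓ+1) ≤ 0 := hodd.pow_nonpos ht0
          have hq : 0 ≤ ((2*j+ℓ+1 : ℕ) : ℝ) + 1 + t := by
            push_cast
            linarith
          have hfac : (0:ℝ) < (Nat.factorial (2*j+ℓ+2) : ℝ) := by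
            exact_mod_cast (2*j+ℓ+2).factorial_pos
          exact div_nonpos_of_nonpos_of_nonneg (mul_nonpos_of_nonpos_of_nonneg hp hq) hfac.le
        have htail : ∑' k, g k ≤ 0 := by
          rw [← hsplit, ← Summable.tsum_add he ho]
          exact tsum_nonpos hpairs
        linarith [hkey, htail]
    nlinarith [Real.exp_pos t]
  · -- nonnegative case
    set f : ℕ → ℝ := fun n => t ^ n / (Nat.factorial n : ℝ) with hf
    have hsum : Summable f := summable_exp' t
    set c := t ^ (ℓ+1) / (Nat.factorial (ℓ+1) : ℝ) with hc
    have hc0 : 0 ≤ c := by positivity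
    have hkey : Real.exp t = E + ∑' k, f (k + (ℓ + 1)) := by
      rw [exp_tsum' t, ← Summable.sum_add_tsum_nat_add (ℓ+1) hsum]
    have hterm : ∀ k : ℕ, f (k + (ℓ+1)) ≤ c * f k := by
      intro k
      have heq : c * f k = t ^ (k + (ℓ+1)) / ((Nat.factorial (ℓ+1) * Nat.factorial k : ℕ) : ℝ) := by
        simp only [hc, hf]
        rw [pow_add]
        push_cast
        rw [div_mul_div_comm]
        ring_nf
      rw [heq]
      have hdvd : Nat.factorial (ℓ+1) * Nat.factorial k ≤ Nat.factorial (k + (ℓ+1)) := by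
        refine Nat.le_of_dvd (Nat.factorial_pos _) ?_
        rw [add_comm k (ℓ+1)]
        exact Nat.factorial_mul_factorial_dvd_factorial_add (ℓ+1) k
      exact div_le_div_of_nonneg_left (by positivity)
        (by exact_mod_cast Nat.mul_pos (Nat.factorial_pos _) (Nat.factorial_pos _))
        (by exact_mod_cast hdvd)
    have htail : ∑' k, f (k + (ℓ+1)) ≤ c * Real.exp t := by
      calc ∑' k, f (k + (ℓ+1)) ≤ ∑' k, c * f k :=
            Summable.tsum_le_tsum hterm ((summable_nat_add_iff (ℓ+1)).2 hsum) (hsum.mul_left c)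
        _ = c * Real.exp t := by rw [tsum_mul_left, ← exp_tsum' t]
    have h1 : Real.exp t ≤ E + c * Real.exp t := by linarith [hkey, htail]
    -- bound c ≤ exp (-(ℓ+1))
    have h2 : c ≤ Real.exp (-((ℓ:ℝ)+1)) := by
      set n := ℓ + 1 with hn
      have hfac : (0:ℝ) < (Nat.factorial n : ℝ) := by exact_mod_cast n.factorial_pos
      have he2 : (0:ℝ) < (Real.exp 1)^2 := by positivity
      have htn : t ^ n ≤ ((ℓ:ℝ) / (Real.exp 1)^2) ^ n :=
        pow_le_pow_left₀ ht0 ht n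
      have hℓn : ((ℓ:ℝ)) ^ n ≤ ((n:ℝ)) ^ n := by
        apply pow_le_pow_left₀ (by positivity)
        exact_mod_cast Nat.le_succ ℓ
      have hnn : ((n:ℝ)) ^ n ≤ (Nat.factorial n : ℝ) * Real.exp n := pow_self_le n
      have hexpn : Real.exp (n:ℝ) = (Real.exp 1) ^ n := by
        rw [← Real.exp_nat_mul]; norm_num
      have hexp2n : ((Real.exp 1)^2) ^ n = (Real.exp 1) ^ n * (Real.exp 1) ^ n := by
        rw [← pow_mul, two_mul, pow_add]
      have hexpneg : Real.exp (-((ℓ:ℝ)+1)) = 1 / (Real.exp 1) ^ n := by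
        rw [Real.exp_neg, ← Real.exp_nat_mul]
        push_cast [hn]
        norm_num
      rw [hc, hexpneg, div_le_div_iff₀ hfac (by positivity)]
      calc t ^ n * (Real.exp 1) ^ n ≤ ((ℓ:ℝ) / (Real.exp 1)^2) ^ n * (Real.exp 1) ^ n := by
            apply mul_le_mul_of_nonneg_right htn (by positivity)
        _ = (ℓ:ℝ) ^ n * (Real.exp 1) ^ n / ((Real.exp 1)^2) ^ n := by
            rw [div_pow]; ring
        _ ≤ ((n:ℝ)) ^ n * (Real.exp 1) ^ n / ((Real.exp 1)^2) ^ n := by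
            apply div_le_div_of_nonneg_right _ (by positivity)
            · exact mul_le_mul_of_nonneg_right hℓn (by positivity)
        _ ≤ (Nat.factorial n : ℝ) * Real.exp n * (Real.exp 1) ^ n / ((Real.exp 1)^2) ^ n := by
            apply div_le_div_of_nonneg_right _ (by positivity)
            · exact mul_le_mul_of_nonneg_right hnn (by positivity)
        _ = 1 * (Nat.factorial n : ℝ) := by
            rw [hexpn, hexp2n]
            field_simp
    -- numeric inequality
    have hδhalf : δ ≤ 1/2 := by
      have h1 : δ ≤ Real.exp (-1) := by
        apply Real.exp_le_exp.2
        have : (2:ℝ) ≤ ℓ := by exact_mod_cast hℓ2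
        linarith
      have h2 : Real.exp (-1) ≤ 1/2 := by
        rw [Real.exp_neg]
        rw [inv_le_comm₀ (Real.exp_pos 1) (by norm_num)]
        linarith [Real.exp_one_gt_d9]
      linarith
    have hcδ : Real.exp (-((ℓ:ℝ)+1)) ≤ δ / 4 := by
      have h1 : Real.exp (-((ℓ:ℝ)+1)) ≤ Real.exp (-(ℓ:ℝ)/2 - 2) := by
        apply Real.exp_le_exp.2
        have : (2:ℝ) ≤ ℓ := by exact_mod_cast hℓ2
        linarith
      have h2 : Real.exp (-(ℓ:ℝ)/2 - 2) = δ * Real.exp (-2) := by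
        rw [hδ, ← Real.exp_add]; ring_nf
      have h3 : Real.exp (-2:ℝ) ≤ 1/4 := by
        rw [Real.exp_neg]
        rw [inv_le_comm₀ (Real.exp_pos 2) (by norm_num)]
        have := Real.exp_one_gt_d9
        have h4 : Real.exp 2 = Real.exp 1 * Real.exp 1 := by
          rw [← Real.exp_add]; norm_num
        nlinarith
      rw [h2] at h1
      nlinarith
    have h3 : 1 ≤ (1 + δ) * (1 - Real.exp (-((ℓ:ℝ)+1))) := by
      have hcp : 0 < Real.exp (-((ℓ:ℝ)+1)) := Real.exp_pos _
      nlinarith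
    have hE' : Real.exp t * (1 - c) ≤ E := by nlinarith
    have hfin : Real.exp t ≤ (1 + δ) * (Real.exp t * (1 - Real.exp (-((ℓ:ℝ)+1)))) := by
      nlinarith [Real.exp_pos t]
    calc Real.exp t ≤ (1 + δ) * (Real.exp t * (1 - Real.exp (-((ℓ:ℝ)+1)))) := hfin
      _ ≤ (1 + δ) * (Real.exp t * (1 - c)) := by
          apply mul_le_mul_of_nonneg_left _ (by linarith)
          · exact mul_le_mul_of_nonneg_left (by linarith) (Real.exp_pos t).le
      _ ≤ (1 + δ) * E := mul_le_mul_of_nonneg_left hE' (by linarith)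
end

section
/- For any real Dirichlet-polynomial-type coefficients: if F : ℝ → ℂ is a Schwartz function and n is an odd positive integer, then Σ_{d odd} (d/n)·F(d) = (1/(2n))·(2/n)·Σ_{ℓ ∈ ℤ} (−1)^ℓ·G_ℓ(n)·F̃(ℓ/(2n)), where G_ℓ(n) = ((1−i)/2 + (−1/n)(1+i)/2)·Σ_{a mod n} (a/n)e(aℓ/n) and F̃(λ) = ∫_ℝ (cos(2πλξ) + sin(2πλξ))F(ξ)dξ. -/
open MeasureTheory

/-- `e(x) = e^{2πix}`. -/
noncomputable def e2πi (x : ℝ) : ℂ := Complex.exp (2 * Real.pi * Complex.I * x)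

/-- The Gauss-type sum
`G_ℓ(n) = ((1−i)/2 + (−1/n)(1+i)/2)·∑_{a mod n} (a/n)e(aℓ/n)`. -/
noncomputable def gaussG (ℓ : ℤ) (n : ℕ) : ℂ :=
  ((1 - Complex.I) / 2 + (jacobiSym (-1) n : ℂ) * (1 + Complex.I) / 2) *
    ∑ a ∈ Finset.range n, (jacobiSym (a : ℤ) n : ℂ) * e2πi ((a : ℝ) * ℓ / n)

/-- The transform `F̃(λ) = ∫_ℝ (cos(2πλξ) + sin(2πλξ))F(ξ)dξ`. -/
noncomputable def cosSinTransform (F : SchwartzMap ℝ ℂ) (lam : ℝ) : ℂ :=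
  ∫ ξ : ℝ, ((Real.cos (2 * Real.pi * lam * ξ) +
      Real.sin (2 * Real.pi * lam * ξ) : ℝ) : ℂ) * F ξ

section Helpers
open FourierTransform Filter Complex

noncomputable def tauSum (ℓ : ℤ) (n : ℕ) : ℂ :=
  ∑ a ∈ Finset.range n, (jacobiSym (a : ℤ) n : ℂ) * e2πi ((a : ℝ) * ℓ / n)

lemma gaussG_eq (ℓ : ℤ) (n : ℕ) :
    gaussG ℓ n = ((1 - Complex.I) / 2 +
      (jacobiSym (-1) n : ℂ) * (1 + Complex.I) / 2) * tauSum ℓ n := rfl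

lemma e2πi_add (x y : ℝ) : e2πi (x + y) = e2πi x * e2πi y := by
  unfold e2πi; rw [← Complex.exp_add]; push_cast; ring_nf

lemma e2πi_int (k : ℤ) : e2πi k = 1 := by
  unfold e2πi
  rw [show (2 * (Real.pi:ℂ) * Complex.I * (k:ℝ)) = (k:ℤ) * (2 * Real.pi * Complex.I) by
    push_cast; ring]
  exact Complex.exp_int_mul_two_pi_mul_I k

lemma e2πi_add_int (x : ℝ) (k : ℤ) : e2πi (x + k) = e2πi x := by
  rw [e2πi_add, e2πi_int, mul_one]

lemma e2πi_int_half (ℓ : ℤ) : e2πi ((ℓ : ℝ) / 2) = (-1 : ℂ) ^ ℓ := by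
  unfold e2πi
  rw [show (2 * (Real.pi:ℂ) * Complex.I * ((ℓ:ℝ)/2 : ℝ)) = (ℓ:ℤ) * (Real.pi * Complex.I) by
    push_cast; ring]
  rw [Complex.exp_int_mul, Complex.exp_pi_mul_I]

lemma e2πi_norm (x : ℝ) : ‖e2πi x‖ = 1 := by
  unfold e2πi
  rw [show (2 * (Real.pi:ℂ) * Complex.I * (x:ℝ)) = ((2 * Real.pi * x : ℝ) : ℂ) * Complex.I by
    push_cast; ring]
  rw [Complex.norm_exp_ofReal_mul_I]

lemma neg_one_zpow_neg (ℓ : ℤ) : (-1 : ℂ) ^ (-ℓ) = (-1 : ℂ) ^ ℓ := by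
  rw [zpow_neg, ← inv_zpow, inv_neg, inv_one]

lemma neg_one_zpow_norm (ℓ : ℤ) : ‖(-1 : ℂ) ^ ℓ‖ = 1 := by
  rw [norm_zpow, norm_neg, norm_one, one_zpow]

lemma jacobi_norm_le_one (a : ℤ) (n : ℕ) : ‖(jacobiSym a n : ℂ)‖ ≤ 1 := by
  rcases jacobiSym.trichotomy a n with h | h | h <;> simp [h]

lemma tau_norm_le (ℓ : ℤ) (n : ℕ) : ‖tauSum ℓ n‖ ≤ n := by
  unfold tauSum
  calc ‖∑ a ∈ Finset.range n, (jacobiSym (a : ℤ) n : ℂ) * e2πi ((a : ℝ) * ℓ / n)‖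
      ≤ ∑ a ∈ Finset.range n, ‖(jacobiSym (a : ℤ) n : ℂ) * e2πi ((a : ℝ) * ℓ / n)‖ :=
        norm_sum_le _ _
    _ ≤ ∑ _a ∈ Finset.range n, 1 := by
        refine Finset.sum_le_sum fun a _ => ?_
        rw [norm_mul, e2πi_norm, mul_one]
        exact jacobi_norm_le_one _ _
    _ = n := by simp

lemma summable_norm_schwartz (G : SchwartzMap ℝ ℂ) :
    Summable fun m : ℤ => ‖G (m : ℝ)‖ := by
  apply summable_of_isBigO (Real.summable_abs_int_rpow one_lt_two)
  exact ((G.isBigO_cocompact_rpow (-2)).norm_left).comp_tendsto Int.tendsto_coe_cofinite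

def finIntEquiv (N : ℕ) (hN : 0 < N) : Fin N × ℤ ≃ ℤ where
  toFun p := N * p.2 + p.1
  invFun d := (⟨(d % N).toNat, by
      have h1 : (0:ℤ) < N := by exact_mod_cast hN
      have := Int.emod_nonneg d (by positivity : (N:ℤ) ≠ 0)
      have h2 := Int.emod_lt_of_pos d h1
      omega⟩, d / N)
  left_inv p := by
    obtain ⟨α, m⟩ := p
    have hα : (α : ℤ) < N := by exact_mod_cast α.2
    have hα0 : (0:ℤ) ≤ α := by positivity
    have hmod : ((N:ℤ) * m + α) % N = α := by
      rw [add_comm, Int.add_mul_emod_self_left, Int.emod_eq_of_lt hα0 hα]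
    have hdiv : ((N:ℤ) * m + α) / N = m := by
      rw [add_comm, Int.add_mul_ediv_left _ _ (by positivity : (N:ℤ) ≠ 0),
        Int.ediv_eq_zero_of_lt hα0 hα, zero_add]
    simp only [hmod, hdiv]
    ext <;> simp
  right_inv d := by
    simp only []
    have h1 : (0:ℤ) < N := by exact_mod_cast hN
    have h0 := Int.emod_nonneg d (by positivity : (N:ℤ) ≠ 0)
    have h2 : ((d % N).toNat : ℤ) = d % N := Int.toNat_of_nonneg h0
    rw [h2]
    exact Int.mul_ediv_add_emod d N

/-- Grouping an absolutely summable sum over `ℤ` by residues mod `N`. -/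
lemma tsum_int_grouped (g : ℤ → ℂ) (hg : Summable g) (N : ℕ) (hN : 0 < N) :
    ∑' d : ℤ, g d = ∑ α ∈ Finset.range N, ∑' m : ℤ, g (N * m + α) := by
  rw [← (finIntEquiv N hN).tsum_eq g]
  have hsum : Summable (g ∘ (finIntEquiv N hN)) := (finIntEquiv N hN).summable_iff.mpr hg
  have h0 : ∑' (c : Fin N × ℤ), g ((finIntEquiv N hN) c)
      = ∑' (p : Fin N × ℤ), (g ∘ ⇑(finIntEquiv N hN)) p := rfl
  rw [h0, Summable.tsum_prod' hsum (fun α => by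
    exact hsum.comp_injective (fun m m' h => by simpa using congrArg Prod.snd h))]
  rw [tsum_fintype]
  rw [Finset.sum_range (f := fun α => ∑' m : ℤ, g (N * m + α))]
  rfl

lemma fourier_comp_mul (f : ℝ → ℂ) (c : ℝ) (hc : 0 < c) (ξ : ℝ) :
    FourierTransform.fourier (fun x => f (c * x)) ξ
      = (1 / c : ℂ) * FourierTransform.fourier f (ξ / c) := by
  have hc' : (c : ℂ) ≠ 0 := by exact_mod_cast hc.ne'
  rw [Real.fourier_real_eq_integral_exp_smul,
    Real.fourier_real_eq_integral_exp_smul]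
  have key : (fun v : ℝ => Complex.exp (↑(-2 * Real.pi * v * ξ) * Complex.I) • f (c * v))
      = fun v : ℝ =>
        (fun y => Complex.exp (↑(-2 * Real.pi * y * (ξ / c)) * Complex.I) • f y) (c * v) := by
    funext v
    simp only []
    congr 2
    push_cast
    field_simp
  rw [key, Measure.integral_comp_mul_left
    (fun y => Complex.exp (↑(-2 * Real.pi * y * (ξ / c)) * Complex.I) • f y) c]
  rw [abs_of_pos (inv_pos.mpr hc), Complex.real_smul]
  push_cast
  rw [one_div]

/-- The scaled Schwartz function `x ↦ F (c x)`. -/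
noncomputable def scaleSchwartz (F : SchwartzMap ℝ ℂ) (c : ℝ) (hc : c ≠ 0) :
    SchwartzMap ℝ ℂ :=
  SchwartzMap.compCLMOfContinuousLinearEquiv ℝ
    ((LinearEquiv.smulOfNeZero ℝ ℝ c hc).toContinuousLinearEquiv) F

lemma scaleSchwartz_apply (F : SchwartzMap ℝ ℂ) (c : ℝ) (hc : c ≠ 0) (x : ℝ) :
    scaleSchwartz F c hc x = F (c * x) := by
  simp [scaleSchwartz, SchwartzMap.compCLMOfContinuousLinearEquiv_apply]

/-- Poisson summation along the residue class `α` mod `N`. -/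
lemma poisson_residue (F : SchwartzMap ℝ ℂ) (N : ℕ) (hN : 0 < N) (α : ℕ) :
    ∑' m : ℤ, F (((N : ℤ) * m + α : ℤ) : ℝ)
      = ∑' ℓ : ℤ, (1 / (N : ℂ)) * FourierTransform.fourier (⇑F) ((ℓ : ℝ) / N) *
          e2πi ((α : ℝ) * ℓ / N) := by
  have hNR : (0:ℝ) < N := by exact_mod_cast hN
  set G := scaleSchwartz F N hNR.ne'
  have hG : ∀ x : ℝ, G x = F (N * x) := scaleSchwartz_apply F N hNR.ne'
  have key := G.tsum_eq_tsum_fourier ((α : ℝ) / N)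
  calc ∑' m : ℤ, F (((N : ℤ) * m + α : ℤ) : ℝ)
      = ∑' m : ℤ, G ((α : ℝ) / N + m) := by
        refine tsum_congr fun m => ?_
        rw [hG]
        congr 1
        field_simp
        push_cast
        ring
    _ = ∑' ℓ : ℤ, SchwartzMap.fourierTransformCLM ℝ G ℓ *
          fourier ℓ (((α : ℝ) / N : ℝ) : UnitAddCircle) := key
    _ = ∑' ℓ : ℤ, (1 / (N : ℂ)) * FourierTransform.fourier (⇑F) ((ℓ : ℝ) / N) *
          e2πi ((α : ℝ) * ℓ / N) := by
        refine tsum_congr fun ℓ => ?_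
        rw [SchwartzMap.fourierTransformCLM_apply, SchwartzMap.fourier_coe]
        have h1 : FourierTransform.fourier (⇑G) ℓ
            = (1 / (N : ℂ)) * FourierTransform.fourier (⇑F) ((ℓ : ℝ) / N) := by
          have hGe : (⇑G) = fun x => F ((N:ℝ) * x) := funext hG
          rw [hGe, fourier_comp_mul _ _ hNR]
          push_cast
          ring
        rw [h1, fourier_coe_apply]
        congr 1
        unfold e2πi
        congr 1
        push_cast
        field_simp

lemma cosSin_eq (F : SchwartzMap ℝ ℂ) (lam : ℝ) :
    cosSinTransform F lam = (1 - Complex.I) / 2 * FourierTransform.fourier (⇑F) (-lam)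
      + (1 + Complex.I) / 2 * FourierTransform.fourier (⇑F) lam := by
  have hFi : Integrable (⇑F) := F.integrable
  have hb : ∀ a : ℝ → ℝ, Continuous a →
      Integrable (fun v => Complex.exp ((a v : ℂ) * Complex.I) * F v) := by
    intro a ha
    apply hFi.bdd_mul (c := 1)
    · exact (Complex.continuous_exp.comp (by continuity)).aestronglyMeasurable
    · exact Filter.Eventually.of_forall (fun v => le_of_eq (by
        rw [Complex.norm_exp_ofReal_mul_I]))
  have h1 := hb (fun v => 2 * Real.pi * v * lam) (by continuity)
  have h2 := hb (fun v => -(2 * Real.pi * v * lam)) (by continuity)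
  have hpt : ∀ ξ : ℝ,
      ((Real.cos (2 * Real.pi * lam * ξ) + Real.sin (2 * Real.pi * lam * ξ) : ℝ) : ℂ) * F ξ
      = (1 - Complex.I) / 2 * (Complex.exp (((2 * Real.pi * ξ * lam : ℝ) : ℂ) * Complex.I) * F ξ)
        + (1 + Complex.I) / 2 *
          (Complex.exp (((-(2 * Real.pi * ξ * lam) : ℝ) : ℂ) * Complex.I) * F ξ) := by
    intro ξ
    have hswap : 2 * Real.pi * lam * ξ = 2 * Real.pi * ξ * lam := by ring
    rw [hswap]
    set θ : ℝ := 2 * Real.pi * ξ * lam with hθ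
    have e1 : Complex.exp ((θ : ℂ) * Complex.I) = Complex.cos θ + Complex.sin θ * Complex.I :=
      Complex.exp_mul_I _
    have e2 : Complex.exp (((-θ : ℝ) : ℂ) * Complex.I)
        = Complex.cos θ - Complex.sin θ * Complex.I := by
      push_cast
      rw [Complex.exp_mul_I, Complex.cos_neg, Complex.sin_neg]
      ring
    rw [e1, e2]
    push_cast [Complex.ofReal_cos, Complex.ofReal_sin]
    linear_combination (Complex.sin (θ : ℂ)) * (F ξ) * Complex.I_sq
  rw [cosSinTransform, Real.fourier_real_eq_integral_exp_smul,
    Real.fourier_real_eq_integral_exp_smul]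
  rw [integral_congr_ae (Filter.EventuallyEq.of_eq (funext hpt))]
  rw [integral_add (h1.const_mul _) (h2.const_mul _), MeasureTheory.integral_const_mul,
    MeasureTheory.integral_const_mul]
  congr 1
  · congr 1
    refine integral_congr_ae (Filter.EventuallyEq.of_eq (funext fun v => ?_))
    rw [smul_eq_mul]
    congr 2
    push_cast
    ring
  · congr 1
    refine integral_congr_ae (Filter.EventuallyEq.of_eq (funext fun v => ?_))
    rw [smul_eq_mul]
    congr 2
    push_cast
    ring

lemma natmod_decomp (x M : ℕ) : ∃ t : ℤ, ((x % M : ℕ) : ℤ) = (x : ℤ) - M * t := by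
  refine ⟨(x / M : ℕ), ?_⟩
  have h : ((x % M : ℕ) : ℤ) + (M : ℤ) * ((x / M : ℕ) : ℤ) = (x : ℤ) := by
    exact_mod_cast congrArg (Nat.cast : ℕ → ℤ) (Nat.mod_add_div x M)
  linarith

lemma tau_neg (n : ℕ) (hpos : 0 < n) (ℓ : ℤ) :
    tauSum (-ℓ) n = (jacobiSym (-1) n : ℂ) * tauSum ℓ n := by
  unfold tauSum
  rw [Finset.mul_sum]
  symm
  have hinv : ∀ v ∈ Finset.range n, (n - (n - v) % n) % n = v := by
    intro v hv
    have hvn : v < n := Finset.mem_range.mp hv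
    rcases Nat.eq_zero_or_pos v with h0 | h0
    · subst h0; simp [Nat.mod_self]
    · have h1 : (n - v) % n = n - v := Nat.mod_eq_of_lt (by omega)
      rw [h1, Nat.sub_sub_self hvn.le, Nat.mod_eq_of_lt hvn]
  refine Finset.sum_nbij' (fun v => (n - v) % n) (fun v => (n - v) % n) ?_ ?_ ?_ ?_ ?_
  · intro v _; exact Finset.mem_range.mpr (Nat.mod_lt _ hpos)
  · intro v _; exact Finset.mem_range.mpr (Nat.mod_lt _ hpos)
  · intro v hv; exact hinv v hv
  · intro v hv; exact hinv v hv
  · intro v hv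
    have hvn : v < n := Finset.mem_range.mp hv
    show (jacobiSym (-1) n : ℂ) * ((jacobiSym (v : ℤ) n : ℂ) * e2πi ((v : ℝ) * ℓ / n))
      = (jacobiSym (((n - v) % n : ℕ) : ℤ) n : ℂ) *
          e2πi ((((n - v) % n : ℕ) : ℝ) * ((-ℓ : ℤ) : ℝ) / n)
    obtain ⟨t, ht⟩ := natmod_decomp (n - v) n
    set w : ℕ := (n - v) % n with hw
    have hwz : (w : ℤ) = -(v : ℤ) + n * (1 - t) := by
      rw [ht, Nat.cast_sub hvn.le]
      ring
    have hj : (jacobiSym (w : ℤ) n : ℂ)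
        = (jacobiSym (-1) n : ℂ) * (jacobiSym (v : ℤ) n : ℂ) := by
      have h2 : jacobiSym (w : ℤ) n = jacobiSym (-(v : ℤ)) n := by
        apply jacobiSym.mod_left'
        rw [hwz, Int.add_mul_emod_self_left]
      rw [h2, show (-(v:ℤ)) = -1 * v by ring, jacobiSym.mul_left]
      push_cast
      ring
    have he : e2πi ((w : ℝ) * ((-ℓ : ℤ) : ℝ) / n) = e2πi ((v : ℝ) * ℓ / n) := by
      have hnR : (n : ℝ) ≠ 0 := by positivity
      have hwr : (w : ℝ) = -(v : ℝ) + n * (1 - (t : ℝ)) := by exact_mod_cast hwz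
      have harg : (w : ℝ) * ((-ℓ : ℤ) : ℝ) / n
          = (v : ℝ) * ℓ / n + ((-(1 - t) * ℓ : ℤ) : ℝ) := by
        rw [hwr]
        push_cast
        field_simp
        ring
      rw [harg, e2πi_add_int]
    rw [hj, he]
    ring

lemma S_eval (n : ℕ) (hn : Odd n) (hpos : 0 < n) (ℓ : ℤ) :
    ∑ α ∈ Finset.range (2 * n),
        (if Odd α then (jacobiSym (α : ℤ) n : ℂ) else 0) * e2πi ((α : ℝ) * ℓ / (2 * n))
      = (-1 : ℂ) ^ ℓ * (jacobiSym 2 n : ℂ) * tauSum ℓ n := by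
  have h2n : 0 < 2 * n := by omega
  simp_rw [ite_mul, zero_mul]
  rw [← Finset.sum_filter]
  rw [tauSum, Finset.mul_sum]
  symm
  refine Finset.sum_nbij' (fun v => (n + 2 * v) % (2 * n))
    (fun α => ((α + n) % (2 * n)) / 2) ?_ ?_ ?_ ?_ ?_
  · intro v hv
    rw [Finset.mem_filter, Finset.mem_range]
    constructor
    · exact Nat.mod_lt _ h2n
    · rw [Nat.odd_iff, Nat.mod_mod_of_dvd _ ⟨n, rfl⟩, Nat.add_mul_mod_self_left]
      exact Nat.odd_iff.mp hn
  · intro α hα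
    rw [Finset.mem_range]
    rw [Nat.div_lt_iff_lt_mul two_pos]
    calc (α + n) % (2 * n) < 2 * n := Nat.mod_lt _ h2n
      _ = n * 2 := by ring
  · intro v hv
    have hvn : v < n := Finset.mem_range.mp hv
    show (((n + 2 * v) % (2 * n) + n) % (2 * n)) / 2 = v
    rw [Nat.mod_add_mod, show n + 2 * v + n = 2 * v + 2 * n from by ring,
      Nat.add_mod_right, Nat.mod_eq_of_lt (by omega), Nat.mul_div_cancel_left _ two_pos]
  · intro α hα
    rw [Finset.mem_filter, Finset.mem_range] at hα
    obtain ⟨hα2n, hodd⟩ := hα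
    show (n + 2 * (((α + n) % (2 * n)) / 2)) % (2 * n) = α
    have heven : 2 ∣ (α + n) % (2 * n) := by
      rw [Nat.dvd_iff_mod_eq_zero, Nat.mod_mod_of_dvd _ ⟨n, rfl⟩, Nat.add_mod,
        Nat.odd_iff.mp hodd, Nat.odd_iff.mp hn]
    rw [Nat.mul_div_cancel' heven]
    rw [Nat.add_mod_mod, show n + (α + n) = α + 2 * n from by ring,
      Nat.add_mod_right, Nat.mod_eq_of_lt hα2n]
  · intro v hv
    have hvn : v < n := Finset.mem_range.mp hv
    show (-1 : ℂ) ^ ℓ * (jacobiSym 2 n : ℂ) * ((jacobiSym (v : ℤ) n : ℂ) * e2πi ((v : ℝ) * ℓ / n))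
      = (jacobiSym (((n + 2 * v) % (2 * n) : ℕ) : ℤ) n : ℂ) *
          e2πi ((((n + 2 * v) % (2 * n) : ℕ) : ℝ) * ℓ / (2 * n))
    obtain ⟨t, ht⟩ := natmod_decomp (n + 2 * v) (2 * n)
    set w : ℕ := (n + 2 * v) % (2 * n) with hw
    have htz : (w : ℤ) = (n : ℤ) + 2 * v - 2 * n * t := by rw [ht]; push_cast; ring
    have hj : (jacobiSym (w : ℤ) n : ℂ) = (jacobiSym 2 n : ℂ) * (jacobiSym (v : ℤ) n : ℂ) := by
      have h2 : jacobiSym (w : ℤ) n = jacobiSym (2 * v : ℤ) n := by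
        apply jacobiSym.mod_left'
        rw [htz, show (n : ℤ) + 2 * v - 2 * n * t = 2 * v + n * (1 - 2 * t) from by ring,
          Int.add_mul_emod_self_left]
      rw [h2, jacobiSym.mul_left]
      push_cast
      ring
    have he : e2πi ((w : ℝ) * ℓ / (2 * n)) = (-1 : ℂ) ^ ℓ * e2πi ((v : ℝ) * ℓ / n) := by
      have hnR : (n : ℝ) ≠ 0 := by positivity
      have hwr : (w : ℝ) = (n : ℝ) + 2 * v - 2 * n * t := by exact_mod_cast htz
      have harg : (w : ℝ) * ℓ / (2 * n)
          = ((ℓ : ℝ) / 2 + (v : ℝ) * ℓ / n) + ((-t * ℓ : ℤ) : ℝ) := by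
        rw [hwr]
        push_cast
        field_simp
        ring
      rw [harg, e2πi_add_int, e2πi_add, e2πi_int_half]
    rw [hj, he]
    ring

end Helpers

set_option maxHeartbeats 1000000 in
open Classical in
/-- Poisson summation for quadratic characters: for a Schwartz function `F`
and odd positive `n`,
`∑_{d odd} (d/n)F(d) = (1/(2n))(2/n)∑_{ℓ ∈ ℤ} (−1)^ℓ G_ℓ(n) F̃(ℓ/(2n))`. -/
theorem poisson_summation_quadratic (F : SchwartzMap ℝ ℂ) (n : ℕ)
    (hn : Odd n) (hpos : 0 < n) :
    ∑' d : ℤ, (if Odd d then (jacobiSym d n : ℂ) * F (d : ℝ) else 0) =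
      (1 / (2 * (n : ℂ))) * (jacobiSym 2 n : ℂ) *
        ∑' ℓ : ℤ, (-1 : ℂ) ^ ℓ * gaussG ℓ n *
          cosSinTransform F ((ℓ : ℝ) / (2 * n)) := by
  set N : ℕ := 2 * n with hNdef
  have h2n : 0 < N := by omega
  have hNR : (0:ℝ) < (N:ℝ) := by exact_mod_cast h2n
  have hNC : ((N:ℕ) : ℂ) ≠ 0 := by exact_mod_cast h2n.ne'
  have hNcastR : ((N:ℕ) : ℝ) = 2 * (n : ℝ) := by rw [hNdef]; push_cast; ring
  have hNcastC : ((N:ℕ) : ℂ) = 2 * (n : ℂ) := by rw [hNdef]; push_cast; ring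
  set FN := scaleSchwartz F N hNR.ne' with hFNdef
  set GN := SchwartzMap.fourierTransformCLM ℝ FN with hGNdef
  have hGNval : ∀ x : ℝ, (GN x : ℂ)
      = (1/(N:ℂ)) * FourierTransform.fourier (⇑F) (x / N) := by
    intro x
    rw [hGNdef, SchwartzMap.fourierTransformCLM_apply, SchwartzMap.fourier_coe]
    have hFNe : (⇑FN) = fun y => F ((N:ℝ) * y) :=
      funext (scaleSchwartz_apply F N hNR.ne')
    rw [hFNe, fourier_comp_mul _ _ hNR]
    push_cast
    ring
  have hFval : ∀ ℓ : ℤ, FourierTransform.fourier (⇑F) ((ℓ:ℝ) / (2 * (n:ℝ)))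
      = (N:ℂ) * GN (ℓ:ℝ) := by
    intro ℓ
    rw [hGNval ((ℓ:ℝ)), ← hNcastR]
    field_simp
  -- the summand on the left
  set g : ℤ → ℂ := fun d => if Odd d then (jacobiSym d n : ℂ) * F (d : ℝ) else 0 with hgdef
  have hgsum : Summable g := by
    apply Summable.of_norm_bounded (summable_norm_schwartz F)
    intro d
    rw [hgdef]
    dsimp only
    split_ifs with h
    · rw [norm_mul]
      calc ‖(jacobiSym d n : ℂ)‖ * ‖F (d:ℝ)‖ ≤ 1 * ‖F (d:ℝ)‖ :=
          mul_le_mul_of_nonneg_right (jacobi_norm_le_one _ _) (norm_nonneg _)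
        _ = ‖F (d:ℝ)‖ := one_mul _
    · simpa using norm_nonneg _
  set c : ℕ → ℂ := fun α => if Odd α then (jacobiSym (α:ℤ) n : ℂ) else 0 with hcdef
  -- Step A: grouping and Poisson per residue
  have stepA : ∑' d : ℤ, g d = ∑ α ∈ Finset.range N,
      c α * ∑' ℓ : ℤ, GN (ℓ:ℝ) * e2πi ((α:ℝ) * ℓ / N) := by
    rw [tsum_int_grouped g hgsum N h2n]
    refine Finset.sum_congr rfl fun α hα => ?_
    have hterm : ∀ m : ℤ, g ((N:ℤ) * m + α) = c α * F ((((N:ℤ) * m + α : ℤ)):ℝ) := by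
      intro m
      rw [hgdef, hcdef]
      dsimp only
      have hodd : Odd ((N:ℤ) * m + (α:ℤ)) ↔ Odd α := by
        obtain ⟨k, hk⟩ : ∃ k : ℤ, (N:ℤ) * m = 2 * k :=
          ⟨n * m, by rw [hNdef]; push_cast; ring⟩
        rw [hk, Int.odd_iff, Nat.odd_iff]
        omega
      have hjac : jacobiSym ((N:ℤ) * m + α) n = jacobiSym (α:ℤ) n := by
        apply jacobiSym.mod_left'
        rw [hNdef]
        push_cast
        rw [show (2*(n:ℤ))*m + α = α + (n:ℤ)*(2*m) from by ring, Int.add_mul_emod_self_left]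
      by_cases h : Odd α
      · rw [if_pos (hodd.mpr h), if_pos h, hjac]
      · rw [if_neg (fun hh => h (hodd.mp hh)), if_neg h, zero_mul]
    calc ∑' m : ℤ, g ((N:ℤ) * m + α)
        = ∑' m : ℤ, c α * F ((((N:ℤ) * m + α : ℤ)):ℝ) := tsum_congr hterm
      _ = c α * ∑' m : ℤ, F ((((N:ℤ) * m + α : ℤ)):ℝ) := tsum_mul_left
      _ = c α * ∑' ℓ : ℤ, GN (ℓ:ℝ) * e2πi ((α:ℝ) * ℓ / N) := by
          rw [poisson_residue F N h2n α]
          congr 1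
          refine tsum_congr fun ℓ => ?_
          rw [hGNval ((ℓ:ℝ))]
  -- summability of inner summands
  have hsummand : ∀ α ∈ Finset.range N,
      Summable (fun ℓ : ℤ => c α * (GN (ℓ:ℝ) * e2πi ((α:ℝ) * ℓ / N))) := by
    intro α _
    apply Summable.of_norm_bounded (summable_norm_schwartz GN)
    intro ℓ
    rw [norm_mul, norm_mul, e2πi_norm, mul_one]
    have hc1 : ‖c α‖ ≤ 1 := by
      rw [hcdef]
      dsimp only
      split_ifs
      · exact jacobi_norm_le_one _ _
      · norm_num
    calc ‖c α‖ * ‖GN (ℓ:ℝ)‖ ≤ 1 * ‖GN (ℓ:ℝ)‖ :=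
        mul_le_mul_of_nonneg_right hc1 (norm_nonneg _)
      _ = ‖GN (ℓ:ℝ)‖ := one_mul _
  -- character sum evaluation
  have hchar : ∀ ℓ : ℤ, ∑ α ∈ Finset.range N, (c α * e2πi ((α:ℝ) * ℓ / (N:ℝ)))
      = (-1:ℂ)^ℓ * (jacobiSym 2 n : ℂ) * tauSum ℓ n := by
    intro ℓ
    have hS := S_eval n hn hpos ℓ
    rw [hcdef]
    dsimp only
    rw [hNdef, show ((2*n : ℕ):ℝ) = 2*(n:ℝ) from by push_cast; ring]
    exact hS
  -- Step B : left side equals the master series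
  have stepB : ∑' d : ℤ, g d
      = ∑' ℓ : ℤ, ((-1:ℂ)^ℓ * (jacobiSym 2 n : ℂ) * tauSum ℓ n) * GN (ℓ:ℝ) := by
    rw [stepA]
    have h1 : ∀ α ∈ Finset.range N, c α * ∑' ℓ : ℤ, GN (ℓ:ℝ) * e2πi ((α:ℝ) * ℓ / N)
        = ∑' ℓ : ℤ, c α * (GN (ℓ:ℝ) * e2πi ((α:ℝ) * ℓ / N)) := fun α _ => tsum_mul_left.symm
    rw [Finset.sum_congr rfl h1, ← Summable.tsum_finsetSum hsummand]
    refine tsum_congr fun ℓ => ?_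
    calc ∑ α ∈ Finset.range N, c α * (GN (ℓ:ℝ) * e2πi ((α:ℝ) * ℓ / N))
        = ∑ α ∈ Finset.range N, (c α * e2πi ((α:ℝ) * ℓ / N)) * GN (ℓ:ℝ) := by
          refine Finset.sum_congr rfl fun α _ => by ring
      _ = (∑ α ∈ Finset.range N, c α * e2πi ((α:ℝ) * ℓ / N)) * GN (ℓ:ℝ) :=
          (Finset.sum_mul _ _ _).symm
      _ = ((-1:ℂ)^ℓ * (jacobiSym 2 n : ℂ) * tauSum ℓ n) * GN (ℓ:ℝ) := by rw [hchar ℓ]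
  -- now the right-hand side
  have hε : jacobiSym (-1) n = 1 ∨ jacobiSym (-1) n = -1 :=
    jacobiSym.eq_one_or_neg_one (by simp [Int.gcd])
  set ε : ℂ := (jacobiSym (-1) n : ℂ) with hεdef
  set cn : ℂ := (1 - Complex.I)/2 + ε * (1 + Complex.I)/2 with hcndef
  have hconst : cn * ε * ((1 - Complex.I)/2) + cn * ((1 + Complex.I)/2) = 1 := by
    rcases hε with h | h
    · rw [hcndef, hεdef, h]
      push_cast
      ring
    · rw [hcndef, hεdef, h]
      push_cast
      linear_combination -Complex.I_sq
  set A : ℤ → ℂ := fun ℓ => (-1:ℂ)^ℓ * (cn * tauSum ℓ n) *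
      ((1 - Complex.I)/2 * ((N:ℂ) * GN ((-ℓ : ℤ) : ℝ))) with hAdef
  set B : ℤ → ℂ := fun ℓ => (-1:ℂ)^ℓ * (cn * tauSum ℓ n) *
      ((1 + Complex.I)/2 * ((N:ℂ) * GN ((ℓ : ℤ) : ℝ))) with hBdef
  have hterm : ∀ ℓ : ℤ, (-1:ℂ)^ℓ * gaussG ℓ n * cosSinTransform F ((ℓ:ℝ)/(2*(n:ℝ)))
      = A ℓ + B ℓ := by
    intro ℓ
    rw [gaussG_eq, cosSin_eq, hFval ℓ]
    have hneg : FourierTransform.fourier (⇑F) (-((ℓ:ℝ)/(2*(n:ℝ)))) = (N:ℂ) * GN ((-ℓ:ℤ):ℝ) := by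
      have he : -((ℓ:ℝ)/(2*(n:ℝ))) = ((-ℓ : ℤ):ℝ)/(2*(n:ℝ)) := by push_cast; ring
      rw [he, hFval (-ℓ)]
    rw [hneg]
    simp only [hAdef, hBdef, hcndef, hεdef]
    ring
  have hGNneg : Summable fun ℓ : ℤ => ‖GN (((-ℓ : ℤ)) : ℝ)‖ :=
    ((Equiv.neg ℤ).summable_iff).mpr (summable_norm_schwartz GN)
  have hbound : ∀ (ℓ : ℤ) (w : ℂ) (y : ℝ),
      ‖(-1:ℂ)^ℓ * (cn * tauSum ℓ n) * (w * ((N:ℂ) * GN y))‖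
        ≤ (‖cn‖ * n) * (‖w‖ * (‖(N:ℂ)‖ * ‖GN y‖)) := by
    intro ℓ w y
    rw [norm_mul, norm_mul, norm_mul, norm_mul, norm_mul, neg_one_zpow_norm, one_mul]
    apply mul_le_mul_of_nonneg_right _ (by positivity)
    exact mul_le_mul_of_nonneg_left (tau_norm_le ℓ n) (norm_nonneg cn)
  have hAs : Summable A := by
    apply Summable.of_norm_bounded
      (((hGNneg.mul_left (‖(N:ℂ)‖)).mul_left (‖(1 - Complex.I)/2‖)).mul_left (‖cn‖ * n))
    intro ℓ
    exact hbound ℓ _ _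
  have hBs : Summable B := by
    apply Summable.of_norm_bounded
      ((((summable_norm_schwartz GN).mul_left (‖(N:ℂ)‖)).mul_left
        (‖(1 + Complex.I)/2‖)).mul_left (‖cn‖ * n))
    intro ℓ
    exact hbound ℓ _ _
  have hAneg : ∑' ℓ : ℤ, A ℓ = ∑' ℓ : ℤ, A (-ℓ) := ((Equiv.neg ℤ).tsum_eq A).symm
  have hAsneg : Summable (fun ℓ : ℤ => A (-ℓ)) := ((Equiv.neg ℤ).summable_iff).mpr hAs
  have hrhs : ∑' ℓ : ℤ, (-1:ℂ)^ℓ * gaussG ℓ n * cosSinTransform F ((ℓ:ℝ)/(2*(n:ℝ)))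
      = ∑' ℓ : ℤ, ((-1:ℂ)^ℓ * tauSum ℓ n * ((N:ℂ) * GN (ℓ:ℝ))) := by
    rw [tsum_congr hterm, Summable.tsum_add hAs hBs, hAneg, ← Summable.tsum_add hAsneg hBs]
    refine tsum_congr fun ℓ => ?_
    have hAval : A (-ℓ) = (-1:ℂ)^ℓ * (cn * (ε * tauSum ℓ n)) *
        ((1 - Complex.I)/2 * ((N:ℂ) * GN (ℓ:ℝ))) := by
      simp only [hAdef]
      rw [neg_one_zpow_neg, tau_neg n hpos ℓ, neg_neg, ← hεdef]
      all_goals ring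
    rw [hAval]
    simp only [hBdef]
    linear_combination ((-1:ℂ)^ℓ * tauSum ℓ n * ((N:ℂ) * GN (ℓ:ℝ))) * hconst
  -- final computation
  show (∑' d : ℤ, g d) = 1 / (2 * (n:ℂ)) * (jacobiSym 2 n : ℂ) *
    ∑' ℓ : ℤ, (-1:ℂ) ^ ℓ * gaussG ℓ n * cosSinTransform F ((ℓ:ℝ) / (2 * (n:ℝ)))
  rw [stepB, hrhs]
  refine Eq.trans (tsum_congr fun ℓ => ?_) tsum_mul_left
  rw [← hNcastC]
  field_simp
end
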